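/- Let t_1,…,t_n > 0. For i,m ∈ {1,…,n} let d(i,m) be the total time for the cyclic search starting at box i to reach box m inclusive: d(i,m) = Σ_{j=i}^m t_j if i ≤ m, and d(i,m) = Σ_{j=i}^n t_j + Σ_{j=1}^m t_j if i > m. Then for every m ∈ {1,…,n}: Σ_{i=1}^n (t_i / Σ_j t_j) · d(i,m) = (Σ_j t_j² + (Σ_j t_j)²) / (2 Σ_j t_j). In particular, with perfect detection the mixed Searcher strategy that starts the cyclic order at box i with probability t_i/Σ_j t_j has the same expected search time against every hiding location. -/
import Mathlib

open Finset

private lemma sum_iio_mul {n : ℕ} (t : Fin n → ℝ) :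
    ∑ i : Fin n, t i * (∑ j ∈ Finset.Iio i, t j) =
      ((∑ j, t j) ^ 2 - ∑ j, t j ^ 2) / 2 := by
  have hswap : ∑ i : Fin n, ∑ j ∈ Finset.Ioi i, t i * t j
      = ∑ j : Fin n, ∑ i ∈ Finset.Iio j, t i * t j := by
    apply Finset.sum_comm'
    intro x y; simp [Finset.mem_Ioi, Finset.mem_Iio]
  have huniv : ∀ i : Fin n, ∑ j : Fin n, t i * t j =
      (∑ j ∈ Finset.Iio i, t i * t j) + t i * t i + ∑ j ∈ Finset.Ioi i, t i * t j := by
    intro i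
    have h1 : (Finset.univ : Finset (Fin n)) = Finset.Iio i ∪ Finset.Ici i := by
      ext j; simp [lt_or_ge]
    have hdisj : Disjoint (Finset.Iio i) (Finset.Ici i) := by
      simp [Finset.disjoint_left]
    rw [h1, Finset.sum_union hdisj, Finset.Ici_eq_cons_Ioi, Finset.sum_cons]
    ring
  have hsq : (∑ j, t j) ^ 2 = ∑ i : Fin n, ∑ j : Fin n, t i * t j := by
    rw [sq, Finset.sum_mul_sum]
  have : (∑ j, t j) ^ 2 =
      (∑ i : Fin n, ∑ j ∈ Finset.Iio i, t i * t j) + (∑ j, t j ^ 2)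
        + ∑ i : Fin n, ∑ j ∈ Finset.Ioi i, t i * t j := by
    rw [hsq, ← Finset.sum_add_distrib, ← Finset.sum_add_distrib]
    exact Finset.sum_congr rfl fun i _ => by rw [huniv i]; ring
  have heq : ∑ i : Fin n, ∑ j ∈ Finset.Ioi i, t i * t j
      = ∑ i : Fin n, t i * (∑ j ∈ Finset.Iio i, t j) := by
    rw [hswap]
    exact Finset.sum_congr rfl fun j _ => by rw [Finset.mul_sum]; exact Finset.sum_congr rfl fun i _ => mul_comm _ _
  have hX : ∑ i : Fin n, ∑ j ∈ Finset.Iio i, t i * t j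
      = ∑ i : Fin n, t i * (∑ j ∈ Finset.Iio i, t j) := by
    exact Finset.sum_congr rfl fun i _ => (Finset.mul_sum _ _ _).symm
  rw [hX, heq] at this
  linarith

/-- with perfect detection, the mixed Searcher strategy that starts the
cyclic order at box `i` with probability `t_i / Σ_j t_j` has the same expected search
time `(Σ_j t_j² + (Σ_j t_j)²) / (2 Σ_j t_j)` against every hiding location `m`. Here
`d i m` is the total time for the cyclic search starting at box `i` to reach box `m`
inclusive. -/
theorem cyclic_searcher_strategy_equalizes
    {n : ℕ} (t : Fin n → ℝ) (ht : ∀ j, 0 < t j)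
    (d : Fin n → Fin n → ℝ)
    (hd : ∀ i m : Fin n, d i m =
      if i ≤ m then ∑ j ∈ Finset.Icc i m, t j
      else (∑ j ∈ Finset.Ici i, t j) + ∑ j ∈ Finset.Iic m, t j) :
    ∀ m : Fin n,
      ∑ i : Fin n, (t i / ∑ j, t j) * d i m =
        ((∑ j, t j ^ 2) + (∑ j, t j) ^ 2) / (2 * ∑ j, t j) := by
  intro m
  set T : ℝ := ∑ j, t j with hTdef
  set S : ℝ := ∑ j ∈ Finset.Iic m, t j with hSdef
  have hTpos : 0 < T := Finset.sum_pos (fun j _ => ht j) ⟨m, Finset.mem_univ m⟩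
  have hIci : ∀ i : Fin n, ∑ j ∈ Finset.Ici i, t j = T - ∑ j ∈ Finset.Iio i, t j := by
    intro i
    have h1 : (Finset.univ : Finset (Fin n)) = Finset.Iio i ∪ Finset.Ici i := by
      ext j; simp [lt_or_ge]
    have hdisj : Disjoint (Finset.Iio i) (Finset.Ici i) := by
      simp [Finset.disjoint_left]
    have := Finset.sum_union (f := t) hdisj
    rw [← h1] at this
    rw [hTdef]; linarith [this]
  have hdecomp : ∀ i : Fin n, d i m
      = S - (∑ j ∈ Finset.Iio i, t j) + (if i ≤ m then 0 else T) := by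
    intro i
    rw [hd]
    split_ifs with h
    · have h1 : Finset.Iic m = Finset.Iio i ∪ Finset.Icc i m := by
        ext j
        simp only [Finset.mem_Iic, Finset.mem_union, Finset.mem_Iio, Finset.mem_Icc]
        constructor
        · intro hj; rcases lt_or_ge j i with h' | h'
          · exact Or.inl h'
          · exact Or.inr ⟨h', hj⟩
        · rintro (h' | ⟨h1, h2⟩)
          · exact le_trans (le_of_lt h') h
          · exact h2
      have hdisj : Disjoint (Finset.Iio i) (Finset.Icc i m) := by
        simp only [Finset.disjoint_left, Finset.mem_Iio, Finset.mem_Icc]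
        intro a ha ⟨h1, _⟩; exact absurd h1 (not_le.mpr ha)
      have := Finset.sum_union (f := t) hdisj
      rw [← h1] at this
      rw [hSdef]; linarith [this]
    · rw [hIci i]; ring
  have hite : ∑ i : Fin n, t i * (if i ≤ m then (0:ℝ) else T) = (T - S) * T := by
    have h1 : ∀ i : Fin n, t i * (if i ≤ m then (0:ℝ) else T)
        = if i ∈ Finset.Ioi m then t i * T else 0 := by
      intro i
      simp only [Finset.mem_Ioi]
      rcases le_or_gt i m with h | h
      · rw [if_pos h, if_neg (not_lt.mpr h)]; ring
      · rw [if_neg (not_le.mpr h), if_pos h]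
    rw [Finset.sum_congr rfl fun i _ => h1 i, Finset.sum_ite_mem,
      Finset.univ_inter, ← Finset.sum_mul]
    congr 1
    have h2 : (Finset.univ : Finset (Fin n)) = Finset.Iic m ∪ Finset.Ioi m := by
      ext j; simp [le_or_gt]
    have hdisj : Disjoint (Finset.Iic m) (Finset.Ioi m) := by
      simp [Finset.disjoint_left]
    have := Finset.sum_union (f := t) hdisj
    rw [← h2] at this
    rw [hTdef, hSdef]; linarith [this]
  have key : ∑ i : Fin n, t i * d i m = ((∑ j, t j ^ 2) + T ^ 2) / 2 := by
    have hexp : ∑ i : Fin n, t i * d i m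
        = (∑ i : Fin n, t i) * S - (∑ i : Fin n, t i * (∑ j ∈ Finset.Iio i, t j))
          + ∑ i : Fin n, t i * (if i ≤ m then (0:ℝ) else T) := by
      rw [Finset.sum_mul, ← Finset.sum_sub_distrib, ← Finset.sum_add_distrib]
      exact Finset.sum_congr rfl fun i _ => by rw [hdecomp i]; ring
    rw [hexp, hite, sum_iio_mul t, ← hTdef]
    ring
  have hdiv : ∑ i : Fin n, (t i / T) * d i m = (∑ i : Fin n, t i * d i m) / T := by
    rw [Finset.sum_div]
    exact Finset.sum_congr rfl fun i _ => by ring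
  rw [hdiv, key, div_div]
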